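/- Deviation bound for the quadratic decision wagering mechanism: let x > 0 and ε > 0 and set the liquidity parameter β = ε·x. If every agent i is x-best-responding, i.e., S(b^i, b^i) − S(b̂^i, b^i) ≤ x, then the aggregated output satisfies |B̂_k − B_k| ≤ ε^{1/2}·x for every alternative k. -/
import Mathlib


open Real Finset

/-- Expected quadratic score (with liquidity parameter `β`) of a report `r`
against a belief `b`. -/
noncomputable def wagerScore {m : ℕ} (β : ℝ) (r b : Fin m → ℝ) : ℝ :=
  -(1 / β) * ∑ k, (r k - b k) ^ 2

theorem stmt17 (N m : ℕ) (hN : 1 ≤ N) (hm : 1 ≤ m)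
    (x ε : ℝ) (hx : 0 < x) (hε : 0 < ε)
    (β : ℝ) (hβ : β = ε * x)
    (b bhat : Fin N → Fin m → ℝ)
    (hbr : ∀ i, wagerScore β (b i) (b i) - wagerScore β (bhat i) (b i) ≤ x) :
    ∀ k, |(1 / (N : ℝ)) * ∑ i, bhat i k - (1 / (N : ℝ)) * ∑ i, b i k|
      ≤ Real.sqrt ε * x := by
  intro k
  have hβpos : 0 < β := by rw [hβ]; positivity
  have key : ∀ i, |bhat i k - b i k| ≤ Real.sqrt ε * x := by
    intro i
    have h := hbr i
    simp only [wagerScore, sub_self] at h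
    norm_num at h
    have h0 : ∀ j ∈ Finset.univ, (0:ℝ) ≤ (bhat i j - b i j) ^ 2 := by
      intro j _; positivity
    have hsum : (bhat i k - b i k) ^ 2 ≤ ∑ j, (bhat i j - b i j) ^ 2 :=
      Finset.single_le_sum h0 (Finset.mem_univ k)
    have h2 : (1 / β) * ∑ j, (bhat i j - b i j) ^ 2 ≤ x := by rw [one_div]; exact h
    have h3 : ∑ j, (bhat i j - b i j) ^ 2 ≤ β * x := by
      rw [div_mul_eq_mul_div, one_mul, div_le_iff₀ hβpos] at h2
      linarith [h2]
    have h4 : (bhat i k - b i k) ^ 2 ≤ (Real.sqrt ε * x) ^ 2 := by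
      have : (Real.sqrt ε * x) ^ 2 = ε * x ^ 2 := by
        rw [mul_pow, Real.sq_sqrt hε.le]
      rw [this]
      calc (bhat i k - b i k) ^ 2 ≤ β * x := le_trans hsum h3
        _ = ε * x ^ 2 := by rw [hβ]; ring
    have hnn : (0:ℝ) ≤ Real.sqrt ε * x := by positivity
    calc |bhat i k - b i k| = Real.sqrt ((bhat i k - b i k) ^ 2) :=
          (Real.sqrt_sq_eq_abs _).symm
      _ ≤ Real.sqrt ((Real.sqrt ε * x) ^ 2) := Real.sqrt_le_sqrt h4
      _ = Real.sqrt ε * x := Real.sqrt_sq hnn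
  have hNpos : (0:ℝ) < N := by exact_mod_cast hN
  have : |(1 / (N : ℝ)) * ∑ i, bhat i k - (1 / (N : ℝ)) * ∑ i, b i k|
      = (1 / (N : ℝ)) * |∑ i, (bhat i k - b i k)| := by
    rw [← mul_sub, abs_mul, abs_of_pos (by positivity), Finset.sum_sub_distrib]
  rw [this]
  have hbound : |∑ i, (bhat i k - b i k)| ≤ N * (Real.sqrt ε * x) := by
    calc |∑ i, (bhat i k - b i k)| ≤ ∑ i, |bhat i k - b i k| :=
          Finset.abs_sum_le_sum_abs _ _
      _ ≤ ∑ _i : Fin N, (Real.sqrt ε * x) := Finset.sum_le_sum fun i _ => key i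
      _ = N * (Real.sqrt ε * x) := by simp [mul_comm]
  calc (1 / (N : ℝ)) * |∑ i, (bhat i k - b i k)|
      ≤ (1 / (N : ℝ)) * (N * (Real.sqrt ε * x)) := by
        apply mul_le_mul_of_nonneg_left hbound; positivity
    _ = Real.sqrt ε * x := by field_simp
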